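/- (Truncated shifts.) Let Γ = ι →₀ ℕ (finitely supported multi-indices) with degree |α| = ∑_i α i, let n ∈ ℕ, and let Q be the orthogonal projection of H onto the closed span of {z α : |α| ≤ n}. Let w : Γ → ℝ≥0 be finitely supported, and for each γ let S γ be a monomial shift. Then ‖∑_γ w γ • (Q ∘ S γ ∘ Q ∘ (S γ)† ∘ Q)‖ ≤ max over α with |α| ≤ n of ∑_{(γ,β) : γ + β = α} w γ * ‖z γ‖², this maximum is ≤ ∑_{γ : |γ| ≤ n} w γ * ‖z γ‖², and ∑_{γ : |γ| ≤ n} w γ * ‖z γ‖² ≤ ‖∑_γ w γ • (Q ∘ (S γ)† ∘ Q ∘ S γ ∘ Q)‖. In particular the truncated row norm is at most the truncated column norm. -/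

import Mathlib

open scoped NNReal
open ContinuousLinearMap

section Aux
variable {H : Type*} [NormedAddCommGroup H] [InnerProductSpace ℂ H] [CompleteSpace H]
  {ι : Type*} {z : (ι →₀ ℕ) → H}

local notation "⟪" x ", " y "⟫" => @inner ℂ _ _ x y

private lemma aux_inner_self (x : H) : ⟪x, x⟫ = ((‖x‖ ^ 2 : ℝ) : ℂ) := by
  rw [inner_self_eq_norm_sq_to_K]; norm_cast

private lemma aux_mem_orth {s : Set H} {x : H} (hx : ∀ u ∈ s, ⟪x, u⟫ = 0) :
    x ∈ (Submodule.span ℂ s)ᗮ := by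
  rw [Submodule.mem_orthogonal']
  intro u hu
  induction hu using Submodule.span_induction with
  | mem u hu => exact hx u hu
  | zero => simp
  | add u v _ _ hu hv => rw [inner_add_right, hu, hv, add_zero]
  | smul c u _ hu => rw [inner_smul_right, hu, mul_zero]

private lemma aux_eq_zero (hz_dense : (Submodule.span ℂ (Set.range z)).topologicalClosure = ⊤)
    {x : H} (hx : ∀ β, ⟪x, z β⟫ = 0) : x = 0 := by
  have hxo : x ∈ (Submodule.span ℂ (Set.range z))ᗮ :=
    aux_mem_orth (by rintro u ⟨β, rfl⟩; exact hx β)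
  rw [Submodule.topologicalClosure_eq_top_iff] at hz_dense
  rw [hz_dense] at hxo
  simpa using hxo

private lemma aux_adjoint_apply
    (hz_ne : ∀ α, z α ≠ 0)
    (hz_orth : ∀ α β, α ≠ β → ⟪z α, z β⟫ = 0)
    (hz_dense : (Submodule.span ℂ (Set.range z)).topologicalClosure = ⊤)
    {S : H →L[ℂ] H} {γ : ι →₀ ℕ} (hS : ∀ β, S (z β) = z (γ + β))
    {α β : ι →₀ ℕ} (h : γ + β = α) :
    (ContinuousLinearMap.adjoint S) (z α) = ((‖z α‖ ^ 2 / ‖z β‖ ^ 2 : ℝ) : ℂ) • z β := by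
  have hnβ : ‖z β‖ ≠ 0 := norm_ne_zero_iff.mpr (hz_ne β)
  rw [← sub_eq_zero]
  apply aux_eq_zero hz_dense
  intro δ
  rw [inner_sub_left, ContinuousLinearMap.adjoint_inner_left, hS, inner_smul_left,
    Complex.conj_ofReal]
  by_cases hδ : δ = β
  · subst hδ
    rw [h, aux_inner_self, aux_inner_self, ← Complex.ofReal_mul,
      div_mul_cancel₀ _ (pow_ne_zero 2 hnβ), sub_self]
  · have hne : γ + δ ≠ α := by
      intro hc
      apply hδ
      have : γ + δ = γ + β := by rw [hc, h]
      exact add_left_cancel this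
    rw [hz_orth α (γ + δ) (fun hc => hne hc.symm), hz_orth β δ (fun hc => hδ hc.symm), mul_zero, sub_zero]

private lemma aux_adjoint_apply_zero
    (hz_orth : ∀ α β, α ≠ β → ⟪z α, z β⟫ = 0)
    (hz_dense : (Submodule.span ℂ (Set.range z)).topologicalClosure = ⊤)
    {S : H →L[ℂ] H} {γ : ι →₀ ℕ} (hS : ∀ β, S (z β) = z (γ + β))
    {α : ι →₀ ℕ} (h : ∀ β, γ + β ≠ α) :
    (ContinuousLinearMap.adjoint S) (z α) = 0 := by
  apply aux_eq_zero hz_dense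
  intro δ
  rw [ContinuousLinearMap.adjoint_inner_left, hS]
  exact hz_orth α (γ + δ) (fun hc => h δ hc.symm)

private lemma aux_Q_zero
    (hz_orth : ∀ α β, α ≠ β → ⟪z α, z β⟫ = 0)
    (n : ℕ) {Q : H →L[ℂ] H}
    (hQ_mem : ∀ x : H, Q x ∈
      (Submodule.span ℂ (z '' {α | (α.sum fun _ k => k) ≤ n})).topologicalClosure)
    (hQ_fix : ∀ x ∈
      (Submodule.span ℂ (z '' {α | (α.sum fun _ k => k) ≤ n})).topologicalClosure, Q x = x)
    (hQ_sa : ContinuousLinearMap.adjoint Q = Q)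
    {γ : ι →₀ ℕ} (hγ : ¬ (γ.sum fun _ k => k) ≤ n) : Q (z γ) = 0 := by
  have horth : z γ ∈ (Submodule.span ℂ (z '' {α | (α.sum fun _ k => k) ≤ n}))ᗮ := by
    apply aux_mem_orth
    rintro u ⟨α, hα, rfl⟩
    exact hz_orth γ α (fun hc => hγ (by rw [hc]; exact hα))
  have horth' : z γ ∈
      ((Submodule.span ℂ (z '' {α | (α.sum fun _ k => k) ≤ n})).topologicalClosure)ᗮ := by
    rw [← Submodule.orthogonal_orthogonal_eq_closure, Submodule.triorthogonal_eq_orthogonal]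
    exact horth
  have h1 : Q (Q (z γ)) = Q (z γ) := hQ_fix _ (hQ_mem _)
  have h2 : ⟪Q (z γ), Q (z γ)⟫ = 0 := by
    rw [← ContinuousLinearMap.adjoint_inner_right, hQ_sa, h1]
    exact (Submodule.mem_orthogonal' _ _).mp horth' _ (hQ_mem _)
  exact inner_self_eq_zero.mp h2

end Aux
/-- Truncated shifts: with `Γ = ι →₀ ℕ`, `Q` the orthogonal projection onto the
closed span of the monomials of degree at most `n`, and `w` finitely supported, the truncated
row norm is bounded by `max_{|α| ≤ n} ∑_{γ+β=α} w γ ‖z γ‖²`, which is bounded by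
`∑_{|γ| ≤ n} w γ ‖z γ‖²`, which is bounded by the truncated column norm. -/
theorem stmt_8
    {H : Type*} [NormedAddCommGroup H] [InnerProductSpace ℂ H] [CompleteSpace H]
    {ι : Type*}
    (z : (ι →₀ ℕ) → H)
    (hz_ne : ∀ α, z α ≠ 0)
    (hz_orth : ∀ α β, α ≠ β → (inner ℂ (z α) (z β) : ℂ) = 0)
    (hz_dense : (Submodule.span ℂ (Set.range z)).topologicalClosure = ⊤)
    (hz0 : ‖z 0‖ = 1)
    (hcomm : ∀ α β, ‖z (α + β)‖ ≤ ‖z α‖ * ‖z β‖)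
    (n : ℕ)
    (Q : H →L[ℂ] H)
    (hQ_mem : ∀ x : H, Q x ∈
      (Submodule.span ℂ (z '' {α | (α.sum fun _ k => k) ≤ n})).topologicalClosure)
    (hQ_fix : ∀ x ∈
      (Submodule.span ℂ (z '' {α | (α.sum fun _ k => k) ≤ n})).topologicalClosure, Q x = x)
    (hQ_sa : ContinuousLinearMap.adjoint Q = Q)
    (w : (ι →₀ ℕ) →₀ ℝ≥0)
    (S : (ι →₀ ℕ) → H →L[ℂ] H) (hS : ∀ γ β, S γ (z β) = z (γ + β)) :
    ‖∑ γ ∈ w.support, ((w γ : ℝ) : ℂ) •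
        (Q ∘L S γ ∘L Q ∘L ContinuousLinearMap.adjoint (S γ) ∘L Q)‖
      ≤ (⨆ α : {α : ι →₀ ℕ // (α.sum fun _ k => k) ≤ n},
          ∑' p : {p : (ι →₀ ℕ) × (ι →₀ ℕ) // p.1 + p.2 = α.1},
            (w p.1.1 : ℝ) * ‖z p.1.1‖ ^ 2) ∧
    (⨆ α : {α : ι →₀ ℕ // (α.sum fun _ k => k) ≤ n},
        ∑' p : {p : (ι →₀ ℕ) × (ι →₀ ℕ) // p.1 + p.2 = α.1},
          (w p.1.1 : ℝ) * ‖z p.1.1‖ ^ 2)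
      ≤ (∑' γ : {γ : ι →₀ ℕ // (γ.sum fun _ k => k) ≤ n}, (w γ.1 : ℝ) * ‖z γ.1‖ ^ 2) ∧
    (∑' γ : {γ : ι →₀ ℕ // (γ.sum fun _ k => k) ≤ n}, (w γ.1 : ℝ) * ‖z γ.1‖ ^ 2)
      ≤ ‖∑ γ ∈ w.support, ((w γ : ℝ) : ℂ) •
          (Q ∘L ContinuousLinearMap.adjoint (S γ) ∘L Q ∘L S γ ∘L Q)‖ := by
  classical
  have hdeg_add : ∀ γ β : ι →₀ ℕ,
      ((γ + β).sum fun _ k => k) = (γ.sum fun _ k => k) + (β.sum fun _ k => k) :=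
    fun γ β => Finsupp.sum_add_index' (fun _ => rfl) (fun _ _ _ => rfl)
  have hdeg0 : (((0 : ι →₀ ℕ)).sum fun _ k => k) = 0 := Finsupp.sum_zero_index
  have hQfixz : ∀ {α : ι →₀ ℕ}, (α.sum fun _ k => k) ≤ n → Q (z α) = z α := fun {α} hα =>
    hQ_fix _ (Submodule.le_topologicalClosure _ (Submodule.subset_span ⟨α, hα, rfl⟩))
  have hQz : ∀ {α : ι →₀ ℕ}, ¬ (α.sum fun _ k => k) ≤ n → Q (z α) = 0 := fun {α} hα =>
    aux_Q_zero hz_orth n hQ_mem hQ_fix hQ_sa hα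
  have hnz : ∀ α, ‖z α‖ ≠ 0 := fun α => norm_ne_zero_iff.mpr (hz_ne α)
  have hant : ∀ α : ι →₀ ℕ,
      (∑' p : {p : (ι →₀ ℕ) × (ι →₀ ℕ) // p.1 + p.2 = α}, (w p.1.1 : ℝ) * ‖z p.1.1‖ ^ 2)
        = ∑ p ∈ Finset.HasAntidiagonal.antidiagonal α, (w p.1 : ℝ) * ‖z p.1‖ ^ 2 := by
    intro α
    rw [← Finset.tsum_subtype (Finset.HasAntidiagonal.antidiagonal α)
      (fun p => (w p.1 : ℝ) * ‖z p.1‖ ^ 2)]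
    exact (Equiv.subtypeEquivRight (fun p => (Finset.HasAntidiagonal.mem_antidiagonal (a := p)).symm)).tsum_eq
      (fun p : {p : (ι →₀ ℕ) × (ι →₀ ℕ) // p ∈ Finset.HasAntidiagonal.antidiagonal α} =>
        (w p.1.1 : ℝ) * ‖z p.1.1‖ ^ 2)
  have hinj : ∀ α : ι →₀ ℕ, ∀ p ∈ Finset.HasAntidiagonal.antidiagonal α, ∀ q ∈ Finset.HasAntidiagonal.antidiagonal α,
      p.1 = q.1 → p = q := by
    intro α p hp q hq h
    rw [Finset.HasAntidiagonal.mem_antidiagonal] at hp hq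
    have h2 : p.2 = q.2 := by
      apply add_left_cancel (a := p.1)
      rw [hp, h, hq]
    exact Prod.ext h h2
  have hsum_ant : ∀ α : ι →₀ ℕ, (∑ p ∈ Finset.HasAntidiagonal.antidiagonal α, (w p.1 : ℝ) * ‖z p.1‖ ^ 2)
      = ∑ γ ∈ (Finset.HasAntidiagonal.antidiagonal α).image Prod.fst, (w γ : ℝ) * ‖z γ‖ ^ 2 :=
    fun α => (Finset.sum_image (f := fun γ => (w γ : ℝ) * ‖z γ‖ ^ 2) (hinj α)).symm
  have key : ∀ α : ι →₀ ℕ, (α.sum fun _ k => k) ≤ n →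
      (∑ p ∈ Finset.HasAntidiagonal.antidiagonal α, (w p.1 : ℝ) * ‖z p.1‖ ^ 2)
        ≤ ∑ γ ∈ w.support.filter (fun γ => (γ.sum fun _ k => k) ≤ n),
            (w γ : ℝ) * ‖z γ‖ ^ 2 := by
    intro α hα
    rw [hsum_ant α]
    rw [← Finset.sum_filter_of_ne (p := fun γ => γ ∈ w.support)
      (fun γ _ hg => by
        by_contra hns
        exact hg (by simp [Finsupp.notMem_support_iff.mp hns]))]
    apply Finset.sum_le_sum_of_subset_of_nonneg
    · intro γ hγ
      simp only [Finset.mem_filter, Finset.mem_image] at hγ ⊢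
      obtain ⟨⟨p, hp, rfl⟩, hsupp⟩ := hγ
      refine ⟨hsupp, ?_⟩
      rw [Finset.HasAntidiagonal.mem_antidiagonal] at hp
      have h2 := hdeg_add p.1 p.2
      rw [hp] at h2
      omega
    · intro γ _ _
      positivity
  have hfil : (∑' γ : {γ : ι →₀ ℕ // (γ.sum fun _ k => k) ≤ n}, (w γ.1 : ℝ) * ‖z γ.1‖ ^ 2)
      = ∑ γ ∈ w.support.filter (fun γ => (γ.sum fun _ k => k) ≤ n),
          (w γ : ℝ) * ‖z γ‖ ^ 2 := by
    rw [tsum_eq_sum (s := w.support.subtype (fun γ => (γ.sum fun _ k => k) ≤ n))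
      (by intro γ hγ
          rw [Finset.mem_subtype] at hγ
          simp [Finsupp.notMem_support_iff.mp hγ])]
    exact Finset.sum_subtype_eq_sum_filter (fun γ => (w γ : ℝ) * ‖z γ‖ ^ 2) (p := fun γ => (γ.sum fun _ k => k) ≤ n)
  haveI hne_sub : Nonempty {α : ι →₀ ℕ // (α.sum fun _ k => k) ≤ n} :=
    ⟨⟨0, by rw [hdeg0]; exact Nat.zero_le n⟩⟩
  have hbdd : BddAbove (Set.range fun α : {α : ι →₀ ℕ // (α.sum fun _ k => k) ≤ n} =>
      ∑' p : {p : (ι →₀ ℕ) × (ι →₀ ℕ) // p.1 + p.2 = α.1}, (w p.1.1 : ℝ) * ‖z p.1.1‖ ^ 2) := by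
    refine ⟨∑ γ ∈ w.support.filter (fun γ => (γ.sum fun _ k => k) ≤ n),
      (w γ : ℝ) * ‖z γ‖ ^ 2, ?_⟩
    rintro _ ⟨α, rfl⟩
    dsimp only
    rw [hant]
    exact key α.1 α.2
  set M : ℝ := ⨆ α : {α : ι →₀ ℕ // (α.sum fun _ k => k) ≤ n},
      ∑' p : {p : (ι →₀ ℕ) × (ι →₀ ℕ) // p.1 + p.2 = α.1},
        (w p.1.1 : ℝ) * ‖z p.1.1‖ ^ 2 with hM
  have hM_ge : ∀ (α : ι →₀ ℕ), (α.sum fun _ k => k) ≤ n →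
      (∑ p ∈ Finset.HasAntidiagonal.antidiagonal α, (w p.1 : ℝ) * ‖z p.1‖ ^ 2) ≤ M := by
    intro α hα
    rw [← hant α, hM]
    exact le_ciSup hbdd ⟨α, hα⟩
  have hM0 : 0 ≤ M :=
    le_trans (Finset.sum_nonneg fun p _ => by positivity)
      (hM_ge 0 (by rw [hdeg0]; exact Nat.zero_le n))
  have part2 : M ≤ ∑' γ : {γ : ι →₀ ℕ // (γ.sum fun _ k => k) ≤ n},
      (w γ.1 : ℝ) * ‖z γ.1‖ ^ 2 := by
    rw [hM, hfil]
    apply ciSup_le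
    intro α
    rw [hant]
    exact key α.1 α.2
  have part3 : (∑' γ : {γ : ι →₀ ℕ // (γ.sum fun _ k => k) ≤ n}, (w γ.1 : ℝ) * ‖z γ.1‖ ^ 2)
      ≤ ‖∑ γ ∈ w.support, ((w γ : ℝ) : ℂ) •
          (Q ∘L ContinuousLinearMap.adjoint (S γ) ∘L Q ∘L S γ ∘L Q)‖ := by
    set T' := ∑ γ ∈ w.support, ((w γ : ℝ) : ℂ) •
        (Q ∘L ContinuousLinearMap.adjoint (S γ) ∘L Q ∘L S γ ∘L Q) with hT'
    set s : ℝ := ∑ γ ∈ w.support,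
        if (γ.sum fun _ k => k) ≤ n then (w γ : ℝ) * ‖z γ‖ ^ 2 else 0 with hs
    have hs_nonneg : 0 ≤ s := Finset.sum_nonneg fun γ _ => by positivity
    have hTz0 : T' (z 0) = ((s : ℝ) : ℂ) • z 0 := by
      rw [hT', ContinuousLinearMap.sum_apply]
      have hterm : ∀ γ ∈ w.support,
          (((w γ : ℝ) : ℂ) • (Q ∘L ContinuousLinearMap.adjoint (S γ) ∘L Q ∘L S γ ∘L Q)) (z 0)
            = (((if (γ.sum fun _ k => k) ≤ n then (w γ : ℝ) * ‖z γ‖ ^ 2 else 0) : ℝ) : ℂ)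
                • z 0 := by
        intro γ _
        rw [ContinuousLinearMap.smul_apply, ContinuousLinearMap.comp_apply,
          ContinuousLinearMap.comp_apply, ContinuousLinearMap.comp_apply,
          ContinuousLinearMap.comp_apply, hQfixz (by rw [hdeg0]; exact Nat.zero_le n)]
        have hz0γ : S γ (z 0) = z γ := by rw [hS γ 0, add_zero]
        rw [hz0γ]
        by_cases hγ : (γ.sum fun _ k => k) ≤ n
        · rw [hQfixz hγ,
            aux_adjoint_apply hz_ne hz_orth hz_dense (hS γ) (add_zero γ), hz0,
            one_pow, div_one, map_smul, hQfixz (by rw [hdeg0]; exact Nat.zero_le n),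
            if_pos hγ, smul_smul, ← Complex.ofReal_mul]
        · rw [hQz hγ, map_zero, map_zero, if_neg hγ, Complex.ofReal_zero, zero_smul,
            smul_zero]
      rw [Finset.sum_congr rfl hterm, ← Finset.sum_smul, hs]
      norm_cast
    have h1 : s ≤ ‖T'‖ := by
      have h2 : ‖T' (z 0)‖ = s := by
        rw [hTz0, norm_smul, hz0, mul_one, Complex.norm_real, Real.norm_eq_abs,
          abs_of_nonneg hs_nonneg]
      calc s = ‖T' (z 0)‖ := h2.symm
        _ ≤ ‖T'‖ * ‖z 0‖ := T'.le_opNorm _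
        _ = ‖T'‖ := by rw [hz0, mul_one]
    rw [hfil, Finset.sum_filter]
    exact hs ▸ h1
  refine ⟨?_, part2, part3⟩
  set T := ∑ γ ∈ w.support, ((w γ : ℝ) : ℂ) •
      (Q ∘L S γ ∘L Q ∘L ContinuousLinearMap.adjoint (S γ) ∘L Q) with hT
  set D : (ι →₀ ℕ) → ℝ := fun α =>
    if (α.sum fun _ k => k) ≤ n then
      ∑ γ ∈ w.support, (w γ : ℝ) *
        (if h : ∃ β, γ + β = α then ‖z α‖ ^ 2 / ‖z h.choose‖ ^ 2 else 0)
    else 0 with hD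
  have hD0 : ∀ α, 0 ≤ D α := by
    intro α
    rw [hD]
    dsimp only
    split
    · apply Finset.sum_nonneg
      intro γ _
      apply mul_nonneg (w γ).coe_nonneg
      split
      · positivity
      · exact le_rfl
    · exact le_rfl
  have hTz : ∀ α : ι →₀ ℕ, T (z α) = ((D α : ℝ) : ℂ) • z α := by
    intro α
    rw [hT, ContinuousLinearMap.sum_apply, hD]
    dsimp only
    by_cases hα : (α.sum fun _ k => k) ≤ n
    · have hterm : ∀ γ ∈ w.support,
          (((w γ : ℝ) : ℂ) • (Q ∘L S γ ∘L Q ∘L ContinuousLinearMap.adjoint (S γ) ∘L Q)) (z α)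
            = ((((w γ : ℝ) * (if h : ∃ β, γ + β = α then ‖z α‖ ^ 2 / ‖z h.choose‖ ^ 2 else 0))
                : ℝ) : ℂ) • z α := by
        intro γ _
        rw [ContinuousLinearMap.smul_apply, ContinuousLinearMap.comp_apply,
          ContinuousLinearMap.comp_apply, ContinuousLinearMap.comp_apply,
          ContinuousLinearMap.comp_apply, hQfixz hα]
        by_cases h : ∃ β, γ + β = α
        · have hβ := h.choose_spec
          have hdegβ : (h.choose.sum fun _ k => k) ≤ n := by
            have h2 := hdeg_add γ h.choose
            rw [hβ] at h2
            omega
          rw [aux_adjoint_apply hz_ne hz_orth hz_dense (hS γ) hβ, map_smul,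
            hQfixz hdegβ, map_smul, hS γ, hβ, map_smul, hQfixz hα, dif_pos h,
            smul_smul, ← Complex.ofReal_mul]
        · rw [aux_adjoint_apply_zero hz_orth hz_dense (hS γ) (fun β hβ => h ⟨β, hβ⟩),
            map_zero, map_zero, map_zero, dif_neg h, mul_zero, Complex.ofReal_zero,
            zero_smul, smul_zero]
      rw [Finset.sum_congr rfl hterm, ← Finset.sum_smul, if_pos hα]
      norm_cast
    · have hterm : ∀ γ ∈ w.support,
          (((w γ : ℝ) : ℂ) • (Q ∘L S γ ∘L Q ∘L ContinuousLinearMap.adjoint (S γ) ∘L Q)) (z α)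
            = 0 := by
        intro γ _
        rw [ContinuousLinearMap.smul_apply, ContinuousLinearMap.comp_apply,
          ContinuousLinearMap.comp_apply, ContinuousLinearMap.comp_apply,
          ContinuousLinearMap.comp_apply, hQz hα, map_zero, map_zero, map_zero, map_zero,
          smul_zero]
      rw [Finset.sum_congr rfl hterm, Finset.sum_const_zero, if_neg hα, Complex.ofReal_zero,
        zero_smul]
  have hDM : ∀ α, D α ≤ M := by
    intro α
    rw [hD]
    dsimp only
    split
    case isTrue hα =>
      refine le_trans ?_ (hM_ge α hα)
      calc ∑ γ ∈ w.support, (w γ : ℝ) *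
              (if h : ∃ β, γ + β = α then ‖z α‖ ^ 2 / ‖z h.choose‖ ^ 2 else 0)
          ≤ ∑ γ ∈ w.support, (if ∃ β, γ + β = α then (w γ : ℝ) * ‖z γ‖ ^ 2 else 0) := by
            apply Finset.sum_le_sum
            intro γ _
            by_cases h : ∃ β, γ + β = α
            · rw [dif_pos h, if_pos h]
              apply mul_le_mul_of_nonneg_left ?_ (w γ).coe_nonneg
              have hβ := h.choose_spec
              have hnorm : ‖z α‖ ≤ ‖z γ‖ * ‖z h.choose‖ := by
                have hcc := hcomm γ h.choose
                rwa [hβ] at hcc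
              rw [div_le_iff₀ (pow_pos (norm_pos_iff.mpr (hz_ne _)) 2)]
              calc ‖z α‖ ^ 2 ≤ (‖z γ‖ * ‖z h.choose‖) ^ 2 :=
                    pow_le_pow_left₀ (norm_nonneg _) hnorm 2
                _ = ‖z γ‖ ^ 2 * ‖z h.choose‖ ^ 2 := by ring
            · rw [dif_neg h, if_neg h, mul_zero]
        _ = ∑ γ ∈ w.support.filter (fun γ => ∃ β, γ + β = α), (w γ : ℝ) * ‖z γ‖ ^ 2 :=
            (Finset.sum_filter _ _).symm
        _ ≤ ∑ γ ∈ (Finset.HasAntidiagonal.antidiagonal α).image Prod.fst, (w γ : ℝ) * ‖z γ‖ ^ 2 := by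
            apply Finset.sum_le_sum_of_subset_of_nonneg
            · intro γ hγ
              rw [Finset.mem_filter] at hγ
              obtain ⟨-, β, hβ⟩ := hγ
              exact Finset.mem_image.mpr ⟨(γ, β), Finset.HasAntidiagonal.mem_antidiagonal.mpr hβ, rfl⟩
            · intro γ _ _; positivity
        _ = ∑ p ∈ Finset.HasAntidiagonal.antidiagonal α, (w p.1 : ℝ) * ‖z p.1‖ ^ 2 := (hsum_ant α).symm
    case isFalse => exact hM0
  set e : (ι →₀ ℕ) → H := fun α => ((‖z α‖⁻¹ : ℝ) : ℂ) • z α with he_def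
  have he : Orthonormal ℂ e := by
    rw [orthonormal_iff_ite]
    intro i j
    rw [he_def]
    dsimp only
    rw [inner_smul_left, inner_smul_right, Complex.conj_ofReal]
    by_cases h : i = j
    · subst h
      rw [if_pos rfl, aux_inner_self]
      norm_cast
      field_simp [hnz i]
    · rw [if_neg h, hz_orth i j h, mul_zero, mul_zero]
  have hspan : Submodule.span ℂ (Set.range e) = Submodule.span ℂ (Set.range z) := by
    apply le_antisymm
    · rw [Submodule.span_le]
      rintro _ ⟨α, rfl⟩
      exact Submodule.smul_mem _ _ (Submodule.subset_span ⟨α, rfl⟩)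
    · rw [Submodule.span_le]
      rintro _ ⟨α, rfl⟩
      have hzα : z α = ((‖z α‖ : ℝ) : ℂ) • e α := by
        rw [he_def]
        dsimp only
        rw [smul_smul, ← Complex.ofReal_mul, mul_inv_cancel₀ (hnz α), Complex.ofReal_one,
          one_smul]
      rw [hzα]
      exact Submodule.smul_mem _ _ (Submodule.subset_span ⟨α, rfl⟩)
  have htot : ⊤ ≤ (Submodule.span ℂ (Set.range e)).topologicalClosure := by
    rw [hspan, hz_dense]
  set b : HilbertBasis (ι →₀ ℕ) ℂ H := HilbertBasis.mk he htot with hb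
  have hbe : ∀ α, (b α : H) = e α := fun α =>
    congrFun (HilbertBasis.coe_mk he htot) α
  have hT_sa : ContinuousLinearMap.adjoint T = T := by
    rw [hT, map_sum]
    apply Finset.sum_congr rfl
    intro γ _
    rw [map_smulₛₗ]
    congr 1
    · exact Complex.conj_ofReal _
    · simp only [ContinuousLinearMap.adjoint_comp, ContinuousLinearMap.adjoint_adjoint, hQ_sa,
        ContinuousLinearMap.comp_assoc]
  have hTb : ∀ (i : ι →₀ ℕ) (x : H),
      (inner ℂ (b i : H) (T x) : ℂ) = ((D i : ℝ) : ℂ) * inner ℂ (b i : H) x := by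
    intro i x
    conv_lhs => rw [← hT_sa]
    rw [ContinuousLinearMap.adjoint_inner_right]
    rw [hbe, he_def]
    dsimp only
    rw [map_smul, hTz]
    simp only [inner_smul_left, Complex.conj_ofReal]
    ring
  have hpars : ∀ v : H, HasSum (fun i => ‖(inner ℂ (b i : H) v : ℂ)‖ ^ 2) (‖v‖ ^ 2) := by
    intro v
    have h := (b.hasSum_inner_mul_inner v v).mapL Complex.reCLM
    have hfun : (fun i => Complex.reCLM ((inner ℂ v (b i : H) : ℂ) * inner ℂ (b i : H) v))
        = fun i => ‖(inner ℂ (b i : H) v : ℂ)‖ ^ 2 := by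
      funext i
      rw [← inner_conj_symm v (b i : H), RCLike.conj_mul]
      norm_cast
    have hval : Complex.reCLM (inner ℂ v v : ℂ) = ‖v‖ ^ 2 := by
      rw [aux_inner_self]
      rw [Complex.reCLM_apply, Complex.ofReal_re]
    rw [hfun, hval] at h
    exact h
  have hbound : ∀ x : H, ‖T x‖ ≤ M * ‖x‖ := by
    intro x
    have h1 := hpars (T x)
    have h2 := (hpars x).mul_left (M ^ 2)
    have hle : ‖T x‖ ^ 2 ≤ M ^ 2 * ‖x‖ ^ 2 := by
      apply hasSum_le ?_ h1 h2
      intro i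
      rw [hTb i x, norm_mul, mul_pow, Complex.norm_real, Real.norm_eq_abs,
        abs_of_nonneg (hD0 i)]
      apply mul_le_mul_of_nonneg_right ?_ (by positivity)
      exact pow_le_pow_left₀ (hD0 i) (hDM i) 2
    have hsq := Real.sqrt_le_sqrt hle
    rwa [Real.sqrt_sq (norm_nonneg _), ← mul_pow,
      Real.sqrt_sq (mul_nonneg hM0 (norm_nonneg _))] at hsq
  exact T.opNorm_le_bound hM0 hbound
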